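/- arXiv:1407.1132 — 4 statements merged into one kernel-verified Lean document; each statement's English description precedes it below -/
import Mathlib

section
/- For every positive integer n and every j with 0 ≤ j ≤ n−1, the j-fold iterate of ϑ applied to the n-th Euler polynomial is given explicitly by ϑ^j 𝓔_n(t) = ∑_{i=1}^{n−j} (−1)^{i+1} (n+1 choose n−j−i) t^i in ℤ[t]. -/
open Polynomial

/-- The `n`-th Euler polynomial `𝓔_n(t) = −∑_{k=0}^{n−1} (n+1 choose k)(−t)^{n−k} ∈ ℤ[t]`. -/
noncomputable def eulerPoly (n : ℕ) : Polynomial ℤ :=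
  -(∑ k ∈ Finset.range n, C (((n + 1).choose k : ℤ)) * (-X) ^ (n - k))

/-- The map `ϑ : R[t] → R[t]` that discards the terms of degree `≤ 1` of a polynomial and
divides the result by `−t`: `(ϑ p).coeff 0 = 0` and `(ϑ p).coeff k = −(p.coeff (k+1))`
for `k ≥ 1`. -/
noncomputable def theta {R : Type*} [CommRing R] (p : Polynomial R) : Polynomial R :=
  -(p.divX.divX * X)

lemma theta_sum (m : ℕ) (c : ℕ → ℤ) :
    theta (∑ i ∈ Finset.Icc 1 m, C (c i) * X ^ i) =
      ∑ i ∈ Finset.Icc 1 (m - 1), C (-(c (i + 1))) * X ^ i := by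
  rcases Nat.eq_zero_or_pos m with rfl | hm
  · simp [theta]
  unfold theta
  have hd : (∑ i ∈ Finset.Icc 1 m, C (c i) * X ^ i).divX.divX
      = ∑ i ∈ Finset.Icc 1 m, ((C (c i) * X ^ i).divX).divX := by
    rw [← divX_hom_toFun, ← divX_hom_toFun, map_sum, map_sum]
    rfl
  rw [hd]
  have hsplit : Finset.Icc 1 m = insert 1 (Finset.Icc 2 m) := by
    ext x; simp [Finset.mem_Icc]; omega
  rw [hsplit, Finset.sum_insert (by simp)]
  have h1 : ((C (c 1) * X ^ 1).divX).divX = 0 := by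
    rw [divX_C_mul_X_pow, if_neg (by omega : ¬ (1:ℕ) = 0), pow_zero, mul_one, divX_C]
  rw [h1, zero_add]
  have hmap : Finset.Icc 2 m = (Finset.Icc 1 (m - 1)).map (addRightEmbedding 1) := by
    rw [Finset.map_add_right_Icc]
    congr 1
    omega
  rw [hmap, Finset.sum_map, Finset.sum_mul, ← Finset.sum_neg_distrib]
  apply Finset.sum_congr rfl
  intro i hi
  simp only [Finset.mem_Icc] at hi
  simp only [addRightEmbedding_apply]
  have h2 : ((C (c (i + 1)) * X ^ (i + 1)).divX).divX = C (c (i + 1)) * X ^ (i - 1) := by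
    rw [divX_C_mul_X_pow, if_neg (by omega : ¬ i + 1 = 0), Nat.add_sub_cancel,
      divX_C_mul_X_pow, if_neg (by omega : ¬ i = 0)]
  rw [h2, map_neg, mul_assoc, ← pow_succ, show i - 1 + 1 = i by omega, neg_mul]

lemma eulerPoly_eq (n : ℕ) :
    eulerPoly n = ∑ i ∈ Finset.Icc 1 n,
        C ((-1 : ℤ) ^ (i + 1) * ((n + 1).choose (n - i) : ℤ)) * X ^ i := by
  unfold eulerPoly
  rw [← Finset.sum_neg_distrib]
  apply Finset.sum_nbij' (i := fun k => n - k) (j := fun i => n - i)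
  · intro a ha; simp only [Finset.mem_range] at ha; simp [Finset.mem_Icc]; omega
  · intro a ha; simp only [Finset.mem_Icc] at ha; simp [Finset.mem_range]; omega
  · intro a ha; simp only [Finset.mem_range] at ha; omega
  · intro a ha; simp only [Finset.mem_Icc] at ha; omega
  · intro k hk
    simp only [Finset.mem_range] at hk
    have h1 : n - (n - k) = k := by omega
    rw [h1, neg_pow]
    have h2 : C ((-1 : ℤ) ^ (n - k + 1) * ((n + 1).choose k : ℤ))
        = (-1) ^ (n - k + 1) * C (((n + 1).choose k : ℤ)) := by
      rw [map_mul, map_pow, map_neg, map_one]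
    rw [h2]
    ring

/-- For every positive integer `n` and `0 ≤ j ≤ n−1`,
`ϑ^j 𝓔_n(t) = ∑_{i=1}^{n−j} (−1)^{i+1} (n+1 choose n−j−i) t^i` in `ℤ[t]`. -/
theorem theta_iterate_eulerPoly (n j : ℕ) (hn : 0 < n) (hj : j ≤ n - 1) :
    theta^[j] (eulerPoly n) =
      ∑ i ∈ Finset.Icc 1 (n - j),
        C ((-1 : ℤ) ^ (i + 1) * ((n + 1).choose (n - j - i) : ℤ)) * X ^ i := by
    induction j with
  | zero => simpa using eulerPoly_eq n
  | succ j ih =>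
      rw [Function.iterate_succ_apply', ih (by omega), theta_sum]
      apply Finset.sum_congr (by rw [Nat.sub_sub])
      intro i hi
      simp only [Finset.mem_Icc] at hi
      congr 1
      have h3 : n - j - (i + 1) = n - (j + 1) - i := by omega
      rw [h3]
      ring
end

section
/- For every positive integer n, ϑ^{n−1} 𝓔_n(t) = t, and consequently ϑ^{n} 𝓔_n(t) = 0, in ℤ[t]. -/
open Polynomial

lemma divX_mul_X' {R : Type*} [CommRing R] (p : Polynomial R) : (p * X).divX = p := by
  ext n
  simp [Polynomial.coeff_divX, Polynomial.coeff_mul_X]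

lemma divX_neg' {R : Type*} [CommRing R] (p : Polynomial R) : (-p).divX = -p.divX := by
  ext n
  simp [Polynomial.coeff_divX]

lemma theta_neg' {R : Type*} [CommRing R] (p : Polynomial R) : theta (-p) = -theta p := by
  simp [theta, divX_neg']

lemma theta_add' {R : Type*} [CommRing R] (p q : Polynomial R) :
    theta (p + q) = theta p + theta q := by
  simp only [theta, Polynomial.divX_add, add_mul]
  ring

lemma theta_zero' {R : Type*} [CommRing R] : theta (0 : Polynomial R) = 0 := by
  simp [theta]

lemma theta_sum' {R : Type*} [CommRing R] {ι : Type*} (s : Finset ι) (f : ι → Polynomial R) :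
    theta (∑ i ∈ s, f i) = ∑ i ∈ s, theta (f i) := by
  classical
  induction s using Finset.cons_induction with
  | empty => simp [theta_zero']
  | cons i s hi ih => rw [Finset.sum_cons, Finset.sum_cons, theta_add', ih]

lemma theta_mul_X_mul_X {R : Type*} [CommRing R] (q : Polynomial R) :
    theta (q * X * X) = -(q * X) := by
  rw [theta, divX_mul_X', divX_mul_X']

lemma theta_C_mul_negX_pow (c : ℤ) (e : ℕ) :
    theta (C c * (-X) ^ (e + 2)) = C c * (-X) ^ (e + 1) := by
  have h1 : C c * (-X) ^ (e + 2) = (C c * (-X) ^ e) * X * X := by ring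
  rw [h1, theta_mul_X_mul_X]
  ring

lemma theta_C_mul_X (c : ℤ) : theta (C c * X) = 0 := by
  rw [theta, divX_mul_X', Polynomial.divX_C]
  simp

lemma theta_key (f : ℕ → ℤ) (m : ℕ) :
    theta (-(∑ k ∈ Finset.range (m + 1), C (f k) * (-X) ^ (m + 1 - k))) =
      -(∑ k ∈ Finset.range m, C (f k) * (-X) ^ (m - k)) := by
  rw [theta_neg', theta_sum', Finset.sum_range_succ]
  have hlast : theta (C (f m) * (-X) ^ (m + 1 - m)) = 0 := by
    have h1 : m + 1 - m = 1 := by omega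
    rw [h1, pow_one]
    have h2 : C (f m) * (-X) = -(C (f m) * X) := by ring
    rw [h2, theta_neg', theta_C_mul_X, neg_zero]
  rw [hlast, add_zero, neg_inj]
  refine Finset.sum_congr rfl fun k hk => ?_
  have hk' : k < m := Finset.mem_range.mp hk
  have h1 : m + 1 - k = (m - 1 - k) + 2 := by omega
  have h2 : m - k = (m - 1 - k) + 1 := by omega
  rw [h1, h2, theta_C_mul_negX_pow]

lemma theta_iter_eulerPoly (n : ℕ) (j : ℕ) (hj : j < n) :
    theta^[j] (eulerPoly n) =
      -(∑ k ∈ Finset.range (n - j), C (((n + 1).choose k : ℤ)) * (-X) ^ (n - j - k)) := by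
  induction j with
  | zero => simp [eulerPoly]
  | succ j ih =>
    have hj' : j < n := by omega
    rw [Function.iterate_succ_apply', ih hj']
    have hm : n - j = (n - (j + 1)) + 1 := by omega
    have he : ∀ k : ℕ, n - j - k = (n - (j + 1)) + 1 - k := fun k => by omega
    simp only [he, hm]
    exact theta_key (fun k => ((n + 1).choose k : ℤ)) (n - (j + 1))

/-- For every positive integer `n`, `ϑ^{n−1} 𝓔_n(t) = t` and `ϑ^{n} 𝓔_n(t) = 0` in `ℤ[t]`. -/
theorem theta_iterate_eulerPoly_top (n : ℕ) (hn : 0 < n) :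
    theta^[n - 1] (eulerPoly n) = X ∧ theta^[n] (eulerPoly n) = 0 := by
  obtain ⟨m, rfl⟩ : ∃ m, n = m + 1 := ⟨n - 1, by omega⟩
  have h1 : theta^[m + 1 - 1] (eulerPoly (m + 1)) = X := by
    rw [theta_iter_eulerPoly (m + 1) (m + 1 - 1) (by omega)]
    have h2 : m + 1 - (m + 1 - 1) = 1 := by omega
    rw [h2]
    simp
  refine ⟨h1, ?_⟩
  have h3 : m + 1 - 1 = m := by omega
  rw [h3] at h1
  rw [Function.iterate_succ_apply', h1]
  have hX : (X : Polynomial ℤ).divX = 1 := by simpa using divX_mul_X' (1 : Polynomial ℤ)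
  have h1d : (1 : Polynomial ℤ).divX = 0 := by
    rw [← Polynomial.C_1, Polynomial.divX_C]
  rw [theta, hX, h1d]
  simp
end

section
/- For every positive integer n and every q with 1 ≤ q ≤ n, the coefficient of s^q in the formal power series (1+s)^{n+1} · (t·s) · (1 + t·s)^{−1} ∈ (ℤ[t])[[s]] equals ϑ^{n−q} 𝓔_n(t). That is, the total Fulton/Chern class (1+H)^{n+1}·dH/(1+dH) of a degree-d hypersurface in ℙ^n has codimension-q part given by evaluating ϑ^{n−q}𝓔_n at d. -/
open Polynomial

lemma theta_coeff_zero {R : Type*} [CommRing R] (p : Polynomial R) :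
    (theta p).coeff 0 = 0 := by
  simp [theta]

lemma theta_coeff_succ {R : Type*} [CommRing R] (p : Polynomial R) (k : ℕ) :
    (theta p).coeff (k + 1) = -(p.coeff (k + 2)) := by
  simp [theta, Polynomial.coeff_mul_X, Polynomial.coeff_divX]

lemma theta_iterate_coeff {R : Type*} [CommRing R] (m : ℕ) (p : Polynomial R) (k : ℕ) :
    (theta^[m] p).coeff (k + 1) = (-1) ^ m * p.coeff (k + 1 + m) := by
  induction m generalizing k with
  | zero => simp
  | succ m ih =>
      rw [Function.iterate_succ_apply', theta_coeff_succ, ih]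
      have : k + 2 + m = k + 1 + (m + 1) := by omega
      rw [this, pow_succ]
      ring

lemma coeff_neg_X_pow (m i : ℕ) :
    ((-X : Polynomial ℤ) ^ m).coeff i = if i = m then (-1 : ℤ) ^ m else 0 := by
  rw [neg_pow, show ((-1 : Polynomial ℤ)) = C (-1 : ℤ) by simp, ← Polynomial.C_pow,
    Polynomial.coeff_C_mul, Polynomial.coeff_X_pow]
  split_ifs <;> simp

lemma eulerPoly_coeff (n i : ℕ) (h1 : 1 ≤ i) (h2 : i ≤ n) :
    (eulerPoly n).coeff i = -(((n + 1).choose (n - i) : ℤ) * (-1) ^ i) := by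
  rw [eulerPoly, Polynomial.coeff_neg, Polynomial.finset_sum_coeff]
  rw [Finset.sum_eq_single (n - i)]
  · have h3 : n - (n - i) = i := by omega
    rw [Polynomial.coeff_C_mul, coeff_neg_X_pow, h3, if_pos rfl]
  · intro k hk hne
    have : i ≠ n - k := by simp at hk; omega
    rw [Polynomial.coeff_C_mul, coeff_neg_X_pow, if_neg this, mul_zero]
  · intro h
    simp at h
    omega

lemma eulerPoly_coeff_eq_zero (n i : ℕ) (h : i = 0 ∨ n < i) :
    (eulerPoly n).coeff i = 0 := by
  rw [eulerPoly, Polynomial.coeff_neg, Polynomial.finset_sum_coeff]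
  rw [Finset.sum_eq_zero, neg_zero]
  intro k hk
  simp at hk
  have : i ≠ n - k := by omega
  rw [Polynomial.coeff_C_mul, coeff_neg_X_pow, if_neg this, mul_zero]

lemma inv_geom :
    PowerSeries.invOfUnit (1 + PowerSeries.C (R := Polynomial ℤ) X * PowerSeries.X) 1 =
      PowerSeries.mk (fun k => (-X : Polynomial ℤ) ^ k) := by
  set f : PowerSeries (Polynomial ℤ) := 1 + PowerSeries.C (R := Polynomial ℤ) X * PowerSeries.X with hf
  have hconst : PowerSeries.constantCoeff (R := Polynomial ℤ) f = (1 : (Polynomial ℤ)ˣ) := by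
    simp [hf]
  have hmul : f * PowerSeries.mk (fun k => (-X : Polynomial ℤ) ^ k) = 1 := by
    ext k
    cases k with
    | zero => simp [hf]
    | succ k =>
        simp [hf, add_mul, PowerSeries.coeff_C_mul, mul_assoc,
          PowerSeries.coeff_succ_X_mul, PowerSeries.coeff_mk, pow_succ, PowerSeries.coeff_one]
        ring
  have h2 := PowerSeries.mul_invOfUnit f 1 hconst
  calc PowerSeries.invOfUnit f 1
      = 1 * PowerSeries.invOfUnit f 1 := (one_mul _).symm
    _ = PowerSeries.mk (fun k => (-X : Polynomial ℤ) ^ k) * (f * PowerSeries.invOfUnit f 1) := by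
        rw [← hmul]; ring
    _ = _ := by rw [h2, mul_one]

lemma coeff_one_add_X_pow_ps (R : Type*) [CommRing R] (m j : ℕ) :
    PowerSeries.coeff (R := R) j ((1 + PowerSeries.X) ^ m) = (m.choose j : R) := by
  have : ((1 + PowerSeries.X : PowerSeries R)) = ((1 + Polynomial.X : R[X]) : PowerSeries R) := by
    simp
  rw [this, ← Polynomial.coe_pow, Polynomial.coeff_coe, Polynomial.coeff_one_add_X_pow]

/-- For every positive integer `n` and `1 ≤ q ≤ n`, the coefficient of `s^q` in the
formal power series `(1+s)^{n+1} · (t·s) · (1 + t·s)^{−1} ∈ (ℤ[t])⟦s⟧` equals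
`ϑ^{n−q} 𝓔_n(t)`.  Here `t` denotes `Polynomial.X : ℤ[t]` and the inverse of `1 + t·s`
(a power series with constant term `1`) is `invOfUnit _ 1`. -/
theorem coeff_fulton_class_eq_theta_iterate_eulerPoly (n q : ℕ) (hn : 0 < n)
    (hq1 : 1 ≤ q) (hqn : q ≤ n) :
    PowerSeries.coeff (R := Polynomial ℤ) q
      ((1 + PowerSeries.X) ^ (n + 1) *
          (PowerSeries.C (R := Polynomial ℤ) X * PowerSeries.X) *
        PowerSeries.invOfUnit (1 + PowerSeries.C (R := Polynomial ℤ) X * PowerSeries.X) 1) =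
      theta^[n - q] (eulerPoly n) := by
  rw [inv_geom]
  have hB : (PowerSeries.C (R := Polynomial ℤ) X * PowerSeries.X) *
      PowerSeries.mk (fun k => (-X : Polynomial ℤ) ^ k) =
      PowerSeries.mk (fun k => if k = 0 then 0 else -(-X : Polynomial ℤ) ^ k) := by
    ext k
    cases k with
    | zero => simp
    | succ k =>
        simp [PowerSeries.coeff_C_mul, mul_assoc, PowerSeries.coeff_succ_X_mul,
          PowerSeries.coeff_mk, pow_succ]
        ring
  rw [mul_assoc, hB, PowerSeries.coeff_mul]
  ext j
  rw [Polynomial.finset_sum_coeff]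
  have hterm : ∀ p : ℕ × ℕ, p ∈ Finset.HasAntidiagonal.antidiagonal q →
      (PowerSeries.coeff (R := Polynomial ℤ) p.1 ((1 + PowerSeries.X) ^ (n + 1)) *
        PowerSeries.coeff (R := Polynomial ℤ) p.2
          (PowerSeries.mk fun k => if k = 0 then 0 else -(-X : Polynomial ℤ) ^ k)).coeff j =
      if p.2 = j ∧ 1 ≤ j then (((n + 1).choose p.1 : ℤ) * (-(-1) ^ j)) else 0 := by
    intro p _
    rw [coeff_one_add_X_pow_ps, PowerSeries.coeff_mk]
    by_cases h2 : p.2 = 0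
    · rw [if_pos h2, mul_zero, Polynomial.coeff_zero]
      have : ¬(p.2 = j ∧ 1 ≤ j) := by omega
      rw [if_neg this]
    · rw [if_neg h2, mul_neg, Polynomial.coeff_neg, ← Polynomial.C_eq_natCast,
        Polynomial.coeff_C_mul, coeff_neg_X_pow]
      by_cases h3 : j = p.2
      · have : p.2 = j ∧ 1 ≤ j := by omega
        rw [if_pos h3, if_pos this, h3]
        ring
      · have : ¬(p.2 = j ∧ 1 ≤ j) := by omega
        rw [if_neg h3, if_neg this, mul_zero, neg_zero]
  rw [Finset.sum_congr rfl hterm]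
  by_cases hj1 : 1 ≤ j
  · by_cases hjq : j ≤ q
    · rw [Finset.sum_eq_single_of_mem (q - j, j)
        (by rw [Finset.HasAntidiagonal.mem_antidiagonal]; omega)]
      · rw [if_pos ⟨rfl, hj1⟩]
        obtain ⟨k, rfl⟩ : ∃ k, j = k + 1 := ⟨j - 1, by omega⟩
        rw [theta_iterate_coeff, eulerPoly_coeff n (k + 1 + (n - q)) (by omega) (by omega)]
        have h4 : n - (k + 1 + (n - q)) = q - (k + 1) := by omega
        have h5 : k + 1 + (n - q) = (k + 1) + (n - q) := rfl
        rw [h4, pow_add (-1 : ℤ) (k + 1) (n - q)]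
        have hsq : ((-1 : ℤ)) ^ (n - q) * (-1 : ℤ) ^ (n - q) = 1 := by
          rw [← pow_add]
          exact Even.neg_one_pow ⟨n - q, rfl⟩
        calc (((n + 1).choose (q - (k + 1)) : ℤ)) * (-(-1) ^ (k + 1))
            = -(((n + 1).choose (q - (k + 1)) : ℤ) * (-1) ^ (k + 1)) *
                ((-1 : ℤ) ^ (n - q) * (-1 : ℤ) ^ (n - q)) := by rw [hsq]; ring
          _ = _ := by ring
      · rintro ⟨a, b⟩ hab hne
        rw [Finset.HasAntidiagonal.mem_antidiagonal] at hab
        have : ¬(b = j ∧ 1 ≤ j) := by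
          rintro ⟨rfl, -⟩
          exact hne (by simp; omega)
        rw [if_neg this]
    · rw [Finset.sum_eq_zero]
      · obtain ⟨k, rfl⟩ : ∃ k, j = k + 1 := ⟨j - 1, by omega⟩
        rw [theta_iterate_coeff,
          eulerPoly_coeff_eq_zero n (k + 1 + (n - q)) (by omega), mul_zero]
      · rintro ⟨a, b⟩ hab
        rw [Finset.HasAntidiagonal.mem_antidiagonal] at hab
        have : ¬(b = j ∧ 1 ≤ j) := by simp at hab ⊢; omega
        rw [if_neg this]
  · have hj0 : j = 0 := by omega
    subst hj0
    rw [Finset.sum_eq_zero (by intro p _; rw [if_neg (by omega)])]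
    rcases Nat.eq_zero_or_pos (n - q) with h | h
    · rw [h, Function.iterate_zero_apply, eulerPoly_coeff_eq_zero n 0 (Or.inl rfl)]
    · obtain ⟨m, hm⟩ : ∃ m, n - q = m + 1 := ⟨n - q - 1, by omega⟩
      rw [hm, Function.iterate_succ_apply', theta_coeff_zero]
end

section
/- For every positive integer n, the following identity holds in ℤ[s,t]: s·𝔠_n^∨(−s−1, t) + 𝔠_n^∨(0, t) = (s+1)·( 𝓔_n(t) + ∑_{j=1}^{n−1} (−1)^j (ϑ^j 𝓔_n)(t) · s·(s+1)^{j−1} ). Equivalently, 𝔢_n(s,t) = 𝓔_n(t) + ∑_{j=1}^{n−1} (−1)^j (ϑ^j 𝓔_n)(t) · s·(s+1)^{j−1}, so the coefficient of s^r in 𝔢_n(s,t) for r ≥ 1 is ∑_{j=r}^{n−1} (−1)^j (j−1 choose r−1) (ϑ^j 𝓔_n)(t). -/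
open Polynomial

/-- `𝔠_n^∨(s,t) = ∑_{j=0}^{n−1} (ϑ^j 𝓔_n)(t) · s^j`, as a polynomial in `s` over `ℤ[t]`. -/
noncomputable def cDual (n : ℕ) : Polynomial (Polynomial ℤ) :=
  ∑ j ∈ Finset.range n, C (theta^[j] (eulerPoly n)) * X ^ j

lemma range_split {M : Type*} [AddCommMonoid M] (n : ℕ) (hn : 0 < n) (f : ℕ → M) :
    ∑ j ∈ Finset.range n, f j = f 0 + ∑ j ∈ Finset.Icc 1 (n - 1), f j := by
  have h : Finset.range n = insert 0 (Finset.Icc 1 (n - 1)) := by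
    ext x; simp [Finset.mem_range, Finset.mem_Icc, Finset.mem_insert]; omega
  rw [h, Finset.sum_insert (by simp)]

/-- For every positive integer `n`:
`s·𝔠_n^∨(−s−1, t) + 𝔠_n^∨(0, t)
   = (s+1)·(𝓔_n(t) + ∑_{j=1}^{n−1} (−1)^j (ϑ^j 𝓔_n)(t) · s·(s+1)^{j−1})`,
and the coefficient of `s^r` (for `r ≥ 1`) in the second factor `𝔢_n(s,t)` is
`∑_{j=r}^{n−1} (−1)^j (j−1 choose r−1) (ϑ^j 𝓔_n)(t)`. -/
theorem e_poly_identity (n : ℕ) (hn : 0 < n) :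
    X * (cDual n).comp (-X - 1) + C ((cDual n).eval 0) =
      (X + 1) *
        (C (eulerPoly n) +
          ∑ j ∈ Finset.Icc 1 (n - 1),
            C ((-1 : Polynomial ℤ) ^ j * theta^[j] (eulerPoly n)) *
              (X * (X + 1) ^ (j - 1))) ∧
    ∀ r : ℕ, 1 ≤ r →
      (C (eulerPoly n) +
          ∑ j ∈ Finset.Icc 1 (n - 1),
            C ((-1 : Polynomial ℤ) ^ j * theta^[j] (eulerPoly n)) *
              (X * (X + 1) ^ (j - 1))).coeff r =
        ∑ j ∈ Finset.Icc r (n - 1),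
          (-1 : Polynomial ℤ) ^ j * (((j - 1).choose (r - 1) : Polynomial ℤ)) *
            theta^[j] (eulerPoly n) := by
  set a : ℕ → Polynomial ℤ := fun j => theta^[j] (eulerPoly n) with ha
  have ha0 : a 0 = eulerPoly n := rfl
  constructor
  · have hcomp : (cDual n).comp (-X - 1) =
        ∑ j ∈ Finset.range n, C (a j) * (-X - 1) ^ j := by
      simp [cDual, eval₂_finset_sum, comp]
      rfl
    have heval : (cDual n).eval 0 = a 0 := by
      rw [cDual, eval_finset_sum, range_split n hn]
      simp only [eval_mul, eval_C, eval_pow, eval_X]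
      rw [Finset.sum_eq_zero (fun j hj => by
        have h1 : 1 ≤ j := (Finset.mem_Icc.mp hj).1
        simp [zero_pow (by omega : j ≠ 0)]), add_zero]
      simp [ha0]
    rw [hcomp, heval, range_split n hn, ha0]
    have : ∀ j ∈ Finset.Icc 1 (n - 1),
        X * (C (a j) * (-X - 1) ^ j) =
        (X + 1) * (C ((-1 : Polynomial ℤ) ^ j * a j) * (X * (X + 1) ^ (j - 1))) := by
      intro j hj
      have hj1 : 1 ≤ j := (Finset.mem_Icc.mp hj).1
      have : (X + 1 : Polynomial (Polynomial ℤ)) ^ j = (X + 1) ^ (j - 1) * (X + 1) := by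
        conv_lhs => rw [← Nat.sub_add_cancel hj1]
        rw [pow_succ]
      have hneg : (-X - 1 : Polynomial (Polynomial ℤ)) ^ j = (-1) ^ j * (X + 1) ^ j := by
        rw [show (-X - 1 : Polynomial (Polynomial ℤ)) = -1 * (X + 1) by ring, mul_pow]
      rw [hneg, this, map_mul, map_pow, map_neg, map_one]
      ring
    rw [mul_add, Finset.mul_sum, Finset.sum_congr rfl this, ← Finset.mul_sum]
    ring
  · intro r hr
    have hcoeff : (C (eulerPoly n)).coeff r = 0 := by
      rw [coeff_C, if_neg (by omega)]
    rw [coeff_add, hcoeff, zero_add, finset_sum_coeff]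
    have hterm : ∀ j ∈ Finset.Icc 1 (n - 1),
        (C ((-1 : Polynomial ℤ) ^ j * a j) * (X * (X + 1) ^ (j - 1))).coeff r =
        (-1 : Polynomial ℤ) ^ j * (((j - 1).choose (r - 1) : Polynomial ℤ)) * a j := by
      intro j hj
      rw [coeff_C_mul]
      have hre : r = (r - 1) + 1 := by omega
      have h2 : (X * (X + 1) ^ (j - 1) : Polynomial (Polynomial ℤ)).coeff r =
          ((j - 1).choose (r - 1) : Polynomial ℤ) := by
        conv_lhs => rw [hre]
        rw [coeff_X_mul, coeff_X_add_one_pow]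
      rw [h2]
      ring
    rw [Finset.sum_congr rfl hterm]
    apply (Finset.sum_subset _ _).symm
    · intro x hx
      simp only [Finset.mem_Icc] at hx ⊢
      omega
    · intro x hx hnx
      simp only [Finset.mem_Icc] at hx hnx
      have : x - 1 < r - 1 := by omega
      rw [Nat.choose_eq_zero_of_lt this]
      simp
end
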